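/- If M is an n×n Manin matrix, then for every m the relation A_m·M⁽¹⁾·M⁽²⁾⋯M⁽ᵐ⁾ = A_m·M⁽¹⁾·M⁽²⁾⋯M⁽ᵐ⁾·A_m holds, where A_m = (1/m!)Σ_{σ∈S_m} sgn(σ)π(σ) is the antisymmetrizer on (ℂⁿ)^{⊗m} and M⁽ᵏ⁾ denotes M acting in the k-th tensor factor. -/

import Mathlib

open Matrix

/-- `M` is a Manin matrix. -/
def IsManin {R : Type*} [Ring R] {n : ℕ} (M : Matrix (Fin n) (Fin n) R) : Prop :=
  (∀ i k j l : Fin n, i < k → j < l →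
    M i j * M k l - M k l * M i j = M k j * M i l - M i l * M k j) ∧
  (∀ i k j : Fin n, M i j * M k j = M k j * M i j)

/-- `M` acting in the `k`-th tensor leg of (ℂⁿ)^{⊗m} (identity elsewhere). -/
def leg {R : Type*} [Ring R] {n m : ℕ} (M : Matrix (Fin n) (Fin n) R) (k : Fin m) :
    Matrix (Fin m → Fin n) (Fin m → Fin n) R :=
  fun f g => if ∀ l, l ≠ k → f l = g l then M (f k) (g k) else 0

/-- Standard permutation representation of S_m on (ℂⁿ)^{⊗m}:
π(σ)(v₁⊗⋯⊗v_m) = v_{σ⁻¹(1)}⊗⋯⊗v_{σ⁻¹(m)}. -/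
def permMat (R : Type*) [Ring R] (n : ℕ) {m : ℕ} (σ : Equiv.Perm (Fin m)) :
    Matrix (Fin m → Fin n) (Fin m → Fin n) R :=
  fun f g => if f = g ∘ ⇑σ⁻¹ then 1 else 0

/-- The antisymmetrizer A_m = (1/m!) Σ_{σ ∈ S_m} sgn(σ) π(σ) on (ℂⁿ)^{⊗m}. -/
noncomputable def antisym (R : Type*) [Ring R] [Algebra ℚ R] (n m : ℕ) :
    Matrix (Fin m → Fin n) (Fin m → Fin n) R :=
  ((m.factorial : ℚ)⁻¹) •
    ∑ σ : Equiv.Perm (Fin m), ((Equiv.Perm.sign σ : ℤ) : ℚ) • permMat R n σ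

/-- The ordered product M⁽¹⁾·M⁽²⁾⋯M⁽ᵐ⁾ on (ℂⁿ)^{⊗m}. -/
def legProd {R : Type*} [Ring R] {n : ℕ} (M : Matrix (Fin n) (Fin n) R) (m : ℕ) :
    Matrix (Fin m → Fin n) (Fin m → Fin n) R :=
  (List.ofFn fun k : Fin m => leg M k).prod

section Aux

open Equiv

variable {R : Type*} [Ring R] {n m : ℕ}

lemma permMat_entry (σ : Perm (Fin m)) (f g : Fin m → Fin n) :
    permMat R n σ f g = if g = f ∘ ⇑σ then 1 else 0 := by
  unfold permMat
  congr 1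
  simp only [eq_iff_iff]
  constructor
  · rintro rfl; funext x; simp
  · rintro rfl; funext x; simp

lemma permMat_mul_apply (σ : Perm (Fin m)) (X : Matrix (Fin m → Fin n) (Fin m → Fin n) R)
    (f g : Fin m → Fin n) : (permMat R n σ * X) f g = X (f ∘ ⇑σ) g := by
  rw [Matrix.mul_apply]
  rw [Finset.sum_eq_single (f ∘ ⇑σ)]
  · rw [permMat_entry, if_pos rfl, one_mul]
  · intro h _ hne
    rw [permMat_entry, if_neg (fun hh => hne hh), zero_mul]
  · intro h; exact absurd (Finset.mem_univ _) h

lemma mul_permMat_apply (σ : Perm (Fin m)) (X : Matrix (Fin m → Fin n) (Fin m → Fin n) R)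
    (f g : Fin m → Fin n) : (X * permMat R n σ) f g = X f (g ∘ ⇑σ⁻¹) := by
  rw [Matrix.mul_apply]
  rw [Finset.sum_eq_single (g ∘ ⇑σ⁻¹)]
  · unfold permMat; rw [if_pos rfl, mul_one]
  · intro h _ hne
    unfold permMat; rw [if_neg (fun hh => hne hh), mul_zero]
  · intro h; exact absurd (Finset.mem_univ _) h

lemma permMat_one : permMat R n (1 : Perm (Fin m)) = 1 := by
  ext f g
  unfold permMat
  rw [Matrix.one_apply]
  congr 1

lemma permMat_mul (σ τ : Perm (Fin m)) :
    permMat R n (σ * τ) = permMat R n σ * permMat R n τ := by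
  ext f g
  rw [permMat_mul_apply]
  unfold permMat
  congr 1
  simp only [eq_iff_iff]
  constructor
  · rintro rfl
    funext x
    show g ((σ * τ)⁻¹ (σ x)) = g (τ⁻¹ x)
    rw [_root_.mul_inv_rev]
    simp
  · intro h
    funext x
    have h2 := congrFun h (σ⁻¹ x)
    simp only [Function.comp_apply, Equiv.apply_symm_apply] at h2
    show f x = g ((σ * τ)⁻¹ x)
    rw [_root_.mul_inv_rev]
    simpa using h2

lemma permMat_mul_leg (σ : Perm (Fin m)) (M : Matrix (Fin n) (Fin n) R) (k : Fin m) :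
    permMat R n σ * leg M k = leg M (σ k) * permMat R n σ := by
  ext f g
  rw [permMat_mul_apply, mul_permMat_apply]
  unfold leg
  have hval : g (σ⁻¹ (σ k)) = g k := by simp
  simp only [Function.comp_apply, hval]
  refine if_congr ?_ rfl rfl
  constructor
  · intro h l hl
    have h2 := h (σ⁻¹ l) (fun hc => hl (by rw [← hc]; simp))
    simpa using h2
  · intro h l hl
    have h2 := h (σ l) (fun hc => hl (σ.injective (by simpa using hc)))
    simpa using h2

lemma permMat_comm_leg (σ : Perm (Fin m)) (M : Matrix (Fin n) (Fin n) R) (k : Fin m)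
    (hk : σ k = k) : Commute (permMat R n σ) (leg M k) := by
  unfold Commute SemiconjBy
  rw [permMat_mul_leg, hk]

lemma leg_mul_leg (M : Matrix (Fin n) (Fin n) R) {a b : Fin m} (hab : a ≠ b)
    (f g : Fin m → Fin n) :
    (leg M a * leg M b) f g =
      if ∀ l, l ≠ a → l ≠ b → f l = g l then M (f a) (g a) * M (f b) (g b) else 0 := by
  rw [Matrix.mul_apply]
  rw [Finset.sum_eq_single (Function.update g b (f b))]
  · unfold leg
    have h2 : ∀ l, l ≠ b → Function.update g b (f b) l = g l := by
      intro l hl; exact Function.update_of_ne hl _ _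
    rw [if_pos h2]
    have hva : Function.update g b (f b) a = g a := Function.update_of_ne hab _ _
    have hvb : Function.update g b (f b) b = f b := Function.update_self _ _ _
    rw [hva, hvb, ite_mul, zero_mul]
    refine if_congr ?_ rfl rfl
    constructor
    · intro h l hla hlb
      have := h l hla
      rwa [Function.update_of_ne hlb] at this
    · intro h l hla
      by_cases hlb : l = b
      · subst hlb; rw [Function.update_self]
      · rw [Function.update_of_ne hlb]; exact h l hla hlb
  · intro h _ hne
    unfold leg
    by_cases h1 : ∀ l, l ≠ a → f l = h l
    · by_cases h2 : ∀ l, l ≠ b → h l = g l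
      · exfalso
        apply hne
        funext l
        by_cases hlb : l = b
        · rw [hlb, Function.update_self]
          exact (h1 b hab.symm).symm
        · rw [Function.update_of_ne hlb]
          exact h2 l hlb
      · rw [if_neg h2, mul_zero]
    · rw [if_neg h1, zero_mul]
  · intro h; exact absurd (Finset.mem_univ _) h

lemma manin_four {M : Matrix (Fin n) (Fin n) R} (hM : IsManin M) (i k j l : Fin n) :
    M i j * M k l + M i l * M k j - M k j * M i l - M k l * M i j = 0 := by
  obtain ⟨h1, h2⟩ := hM
  have key : ∀ A B C D : R, A - D = C - B → A + B - C - D = 0 := by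
    intro A B C D h
    have h' : A + B - C - D = (A - D) - (C - B) := by abel
    rw [h', h, sub_self]
  rcases lt_trichotomy i k with hik | rfl | hik
  · rcases lt_trichotomy j l with hjl | rfl | hjl
    · exact key _ _ _ _ (h1 i k j l hik hjl)
    · rw [h2 i k j]; abel
    · have e := h1 i k l j hik hjl
      refine key _ _ _ _ ?_
      have h3 := congrArg (fun x => -x) e
      simp only [neg_sub] at h3
      exact h3.symm
  · abel
  · rcases lt_trichotomy j l with hjl | rfl | hjl
    · exact key _ _ _ _ (h1 k i j l hik hjl).symm
    · rw [h2 i k j]; abel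
    · have e := h1 k i l j hik hjl
      refine key _ _ _ _ ?_
      have h3 := congrArg (fun x => -x) e
      simp only [neg_sub] at h3
      exact h3

/-- The key two-leg Manin identity: (1-P) L (1+P) = 0, in expanded form. -/
lemma two_leg_key {M : Matrix (Fin n) (Fin n) R} (hM : IsManin M) {a b : Fin m}
    (hab : a ≠ b) :
    leg M a * leg M b + leg M a * leg M b * permMat R n (Equiv.swap a b)
      = permMat R n (Equiv.swap a b) * (leg M a * leg M b)
        + permMat R n (Equiv.swap a b) * (leg M a * leg M b)
            * permMat R n (Equiv.swap a b) := by
  have hs : (Equiv.swap a b)⁻¹ = Equiv.swap a b := Equiv.swap_inv a b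
  ext f g
  have hcond : ∀ f' g' : Fin m → Fin n,
      ((∀ l, l ≠ a → l ≠ b → f' l = (g' ∘ ⇑(Equiv.swap a b)) l) ↔
        (∀ l, l ≠ a → l ≠ b → f' l = g' l)) := by
    intro f' g'
    constructor <;> intro h l hla hlb <;> have h2 := h l hla hlb <;>
      simpa [Equiv.swap_apply_of_ne_of_ne hla hlb] using h2
  have hcond' : ∀ g' : Fin m → Fin n,
      ((∀ l, l ≠ a → l ≠ b → (f ∘ ⇑(Equiv.swap a b)) l = g' l) ↔
        (∀ l, l ≠ a → l ≠ b → f l = g' l)) := by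
    intro g'
    constructor <;> intro h l hla hlb <;> have h2 := h l hla hlb <;>
      simpa [Equiv.swap_apply_of_ne_of_ne hla hlb] using h2
  have e1 : (leg M a * leg M b * permMat R n (Equiv.swap a b)) f g
      = if ∀ l, l ≠ a → l ≠ b → f l = g l
          then M (f a) (g b) * M (f b) (g a) else 0 := by
    rw [mul_permMat_apply, hs, leg_mul_leg M hab]
    refine if_congr (hcond f g) ?_ rfl
    simp
  have e2 : (permMat R n (Equiv.swap a b) * (leg M a * leg M b)) f g
      = if ∀ l, l ≠ a → l ≠ b → f l = g l
          then M (f b) (g a) * M (f a) (g b) else 0 := by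
    rw [permMat_mul_apply, leg_mul_leg M hab]
    refine if_congr (hcond' g) ?_ rfl
    simp
  have e3 : (permMat R n (Equiv.swap a b) * (leg M a * leg M b)
      * permMat R n (Equiv.swap a b)) f g
      = if ∀ l, l ≠ a → l ≠ b → f l = g l
          then M (f b) (g b) * M (f a) (g a) else 0 := by
    rw [mul_permMat_apply, hs, permMat_mul_apply, leg_mul_leg M hab]
    have := hcond' (g ∘ ⇑(Equiv.swap a b))
    refine if_congr (Iff.trans this (hcond f g)) ?_ rfl
    simp
  rw [Matrix.add_apply, Matrix.add_apply, e1, e2, e3, leg_mul_leg M hab]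
  by_cases hC : ∀ l, l ≠ a → l ≠ b → f l = g l
  · rw [if_pos hC, if_pos hC, if_pos hC, if_pos hC]
    have h4 := manin_four hM (f a) (f b) (g a) (g b)
    have h5 : M (f a) (g a) * M (f b) (g b) + M (f a) (g b) * M (f b) (g a)
        - (M (f b) (g a) * M (f a) (g b) + M (f b) (g b) * M (f a) (g a)) = 0 := by
      have : M (f a) (g a) * M (f b) (g b) + M (f a) (g b) * M (f b) (g a)
          - (M (f b) (g a) * M (f a) (g b) + M (f b) (g b) * M (f a) (g a))
          = M (f a) (g a) * M (f b) (g b) + M (f a) (g b) * M (f b) (g a)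
            - M (f b) (g a) * M (f a) (g b) - M (f b) (g b) * M (f a) (g a) := by abel
      rw [this]
      exact h4
    have := sub_eq_zero.mp h5
    exact this
  · rw [if_neg hC, if_neg hC, if_neg hC, if_neg hC]

lemma antisym_mul_permMat [Algebra ℚ R] (τ : Perm (Fin m)) :
    antisym R n m * permMat R n τ
      = ((Equiv.Perm.sign τ : ℤ) : ℚ) • antisym R n m := by
  unfold antisym
  rw [smul_mul_assoc, Finset.sum_mul]
  have h1 : ∀ σ : Perm (Fin m),
      (((Equiv.Perm.sign σ : ℤ) : ℚ) • permMat R n σ) * permMat R n τ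
        = ((Equiv.Perm.sign σ : ℤ) : ℚ) • permMat R n (σ * τ) := by
    intro σ
    rw [smul_mul_assoc, ← permMat_mul]
  simp only [h1]
  have h2 : ∑ σ : Perm (Fin m), ((Equiv.Perm.sign σ : ℤ) : ℚ) • permMat R n (σ * τ)
      = ∑ σ : Perm (Fin m),
          ((Equiv.Perm.sign τ : ℤ) : ℚ) • (((Equiv.Perm.sign σ : ℤ) : ℚ) • permMat R n σ) := by
    refine Fintype.sum_equiv (Equiv.mulRight τ) _ _ ?_
    intro σ
    show ((Equiv.Perm.sign σ : ℤ) : ℚ) • permMat R n (σ * τ)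
      = ((Equiv.Perm.sign τ : ℤ) : ℚ) • (((Equiv.Perm.sign (σ * τ) : ℤ) : ℚ) • permMat R n (σ * τ))
    rw [smul_smul]
    congr 1
    have hu : Equiv.Perm.sign σ = Equiv.Perm.sign τ * Equiv.Perm.sign (σ * τ) := by
      rw [Equiv.Perm.sign_mul, mul_comm (Equiv.Perm.sign σ) (Equiv.Perm.sign τ), ← mul_assoc,
        Int.units_mul_self, one_mul]
    rw [hu]
    simp
  rw [h2, ← Finset.smul_sum, smul_comm]

end Aux

section Main

open Equiv

variable {R : Type*} [Ring R] {n : ℕ}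

/-- A·B·π(swap k,k+1) = −A·B for adjacent transpositions. -/
lemma AB_mul_adjacent_swap [Algebra ℚ R] {M : Matrix (Fin n) (Fin n) R} (hM : IsManin M)
    {m : ℕ} {a b : Fin m} (hab : (a : ℕ) + 1 = (b : ℕ)) :
    antisym R n m * legProd M m * permMat R n (Equiv.swap a b)
      = -(antisym R n m * legProd M m) := by
  have hne : a ≠ b := by
    intro h
    rw [h] at hab
    omega
  set A := antisym R n m with hA
  set P := permMat R n (Equiv.swap a b) with hPdef
  set L := leg M a * leg M b with hL
  -- P commutes with legs other than a, b
  have hPleg : ∀ j : Fin m, j ≠ a → j ≠ b → Commute P (leg M j) := by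
    intro j hja hjb
    exact permMat_comm_leg _ M j (Equiv.swap_apply_of_ne_of_ne hja hjb)
  -- decompose the leg product
  have hbm : (a : ℕ) + 1 < m := by rw [hab]; exact b.isLt
  have ham : (a : ℕ) < m := a.isLt
  have hlen : (List.ofFn fun k : Fin m => leg M k).length = m := List.length_ofFn
  set lst : List (Matrix (Fin m → Fin n) (Fin m → Fin n) R) :=
    List.ofFn (fun k : Fin m => leg M k) with hlst
  set T := (lst.take (a : ℕ)).prod with hT
  set D := (lst.drop ((a : ℕ) + 2)).prod with hD
  have hget : ∀ (i : ℕ) (hi : i < m), lst[i]'(by omega) = leg M ⟨i, hi⟩ := by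
    intro i hi
    exact List.getElem_ofFn ..
  have hgetA : lst[(a : ℕ)]'(by omega) = leg M a := by
    rw [hget _ ham]
  have hgetB : lst[(a : ℕ) + 1]'(by omega) = leg M b := by
    rw [hget _ hbm]
    have hb' : (⟨(a : ℕ) + 1, hbm⟩ : Fin m) = b := by
      apply Fin.ext
      simpa using hab
    rw [hb']
  have hsplit : legProd M m = T * (L * D) := by
    have h1 : legProd M m = (lst.take (a : ℕ)).prod * (lst.drop (a : ℕ)).prod := by
      rw [legProd, ← hlst, List.prod_take_mul_prod_drop]
    have h2 : lst.drop (a : ℕ) = leg M a :: (lst.drop ((a : ℕ) + 1)) := by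
      rw [List.drop_eq_getElem_cons (by omega), hgetA]
    have h3 : lst.drop ((a : ℕ) + 1) = leg M b :: (lst.drop ((a : ℕ) + 2)) := by
      rw [List.drop_eq_getElem_cons (by omega), hgetB]
    rw [h1, h2, h3, List.prod_cons, List.prod_cons, hL, ← hT, ← hD]
    simp only [mul_assoc]
  have hPT : Commute P T := by
    refine Commute.list_prod_right _ _ ?_
    intro x hx
    rw [List.mem_iff_getElem] at hx
    obtain ⟨i, hi, rfl⟩ := hx
    have hi' : i < (a : ℕ) := by
      have := hi
      rw [List.length_take, hlen] at this
      omega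
    rw [List.getElem_take, hget _ (by omega)]
    refine hPleg _ ?_ ?_
    · intro h; have := congrArg Fin.val h; simp at this; omega
    · intro h; have := congrArg Fin.val h; simp at this; omega
  have hPD : Commute P D := by
    refine Commute.list_prod_right _ _ ?_
    intro x hx
    rw [List.mem_iff_getElem] at hx
    obtain ⟨i, hi, rfl⟩ := hx
    have hi' : (a : ℕ) + 2 + i < m := by
      have := hi
      rw [List.length_drop, hlen] at this
      omega
    rw [List.getElem_drop, hget _ (by omega)]
    refine hPleg _ ?_ ?_
    · intro h; have := congrArg Fin.val h; simp at this; omega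
    · intro h; have := congrArg Fin.val h; simp [← hab] at this; omega
  -- the key rearrangement
  have hkey : L + L * P = P * (L + L * P) := by
    rw [mul_add, ← mul_assoc P L P]
    exact two_leg_key hM hne
  have hAP : A * P = -A := by
    rw [hA, hPdef, antisym_mul_permMat, Equiv.Perm.sign_swap hne]
    push_cast
    rw [neg_smul, one_smul]
  -- main computation
  have hZ : A * legProd M m + A * legProd M m * P
      = -(A * legProd M m + A * legProd M m * P) := by
    have expand : A * legProd M m + A * legProd M m * P
        = A * (T * ((L + L * P) * D)) := by
      rw [hsplit]
      have hDP : D * P = P * D := hPD.symm.eq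
      calc A * (T * (L * D)) + A * (T * (L * D)) * P
          = A * (T * (L * D + L * D * P)) := by noncomm_ring
        _ = A * (T * (L * D + L * (P * D))) := by rw [mul_assoc L D P, hDP]
        _ = A * (T * ((L + L * P) * D)) := by noncomm_ring
    have hTP : T * P = P * T := hPT.symm.eq
    have e2 : A * (T * ((L + L * P) * D)) = -(A * (T * ((L + L * P) * D))) := by
      conv_lhs => rw [hkey]
      calc A * (T * (P * (L + L * P) * D))
          = A * (T * P * ((L + L * P) * D)) := by noncomm_ring
        _ = A * (P * T * ((L + L * P) * D)) := by rw [hTP]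
        _ = (A * P) * (T * ((L + L * P) * D)) := by noncomm_ring
        _ = -(A * (T * ((L + L * P) * D))) := by rw [hAP]; noncomm_ring
    rw [expand]
    exact e2
  have hZ0 : A * legProd M m + A * legProd M m * P = 0 := by
    set Z := A * legProd M m + A * legProd M m * P with hZdef
    have h2 : Z + Z = 0 := by
      nth_rewrite 2 [hZ]
      rw [add_neg_cancel]
    have h3 : (2 : ℚ) • Z = 0 := by rw [two_smul]; exact h2
    have := congrArg (fun X => ((2 : ℚ)⁻¹) • X) h3
    simpa [smul_smul] using this
  exact eq_neg_of_add_eq_zero_right hZ0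

end Main

section Final

open Equiv

variable {R : Type*} [Ring R] {n : ℕ}

lemma AB_mul_permMat [Algebra ℚ R] {M : Matrix (Fin n) (Fin n) R} (hM : IsManin M)
    (m : ℕ) (σ : Equiv.Perm (Fin m)) :
    antisym R n m * legProd M m * permMat R n σ
      = ((Equiv.Perm.sign σ : ℤ) : ℚ) • (antisym R n m * legProd M m) := by
  cases m with
  | zero =>
    have hσ : σ = 1 := Subsingleton.elim σ 1
    subst hσ
    rw [permMat_one, mul_one, _root_.map_one]
    simp
  | succ m' =>
    have hσ : σ ∈ Submonoid.closure
        (Set.range fun i : Fin m' => Equiv.swap i.castSucc i.succ) := by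
      rw [Equiv.Perm.mclosure_swap_castSucc_succ]
      exact Submonoid.mem_top σ
    induction hσ using Submonoid.closure_induction with
    | mem x hx =>
      obtain ⟨i, rfl⟩ := hx
      rw [AB_mul_adjacent_swap hM (by simp), Equiv.Perm.sign_swap (Fin.castSucc_lt_succ (i := i)).ne]
      push_cast
      rw [neg_smul, one_smul]
    | one =>
      rw [permMat_one, mul_one, _root_.map_one]
      simp
    | mul x y hx hy ihx ihy =>
      rw [permMat_mul, ← mul_assoc, ihx, smul_mul_assoc, ihy, smul_smul, _root_.map_mul]
      congr 1
      push_cast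
      ring

end Final

/-- for a Manin matrix M,
A_m·M⁽¹⁾⋯M⁽ᵐ⁾ = A_m·M⁽¹⁾⋯M⁽ᵐ⁾·A_m for every m. -/
theorem antisym_legProd_of_manin {R : Type*} [Ring R] [Algebra ℚ R] {n : ℕ}
    (M : Matrix (Fin n) (Fin n) R) (hM : IsManin M) (m : ℕ) :
    antisym R n m * legProd M m = antisym R n m * legProd M m * antisym R n m := by
  have hexp : ∀ X : Matrix (Fin m → Fin n) (Fin m → Fin n) R,
      X * antisym R n m
        = ((m.factorial : ℚ)⁻¹) •
            ∑ σ : Equiv.Perm (Fin m),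
              ((Equiv.Perm.sign σ : ℤ) : ℚ) • (X * permMat R n σ) := by
    intro X
    rw [antisym, mul_smul_comm, Finset.mul_sum]
    congr 1
    refine Finset.sum_congr rfl ?_
    intro σ _
    rw [mul_smul_comm]
  rw [hexp]
  have he : ∀ σ : Equiv.Perm (Fin m),
      ((Equiv.Perm.sign σ : ℤ) : ℚ) • (antisym R n m * legProd M m * permMat R n σ)
        = antisym R n m * legProd M m := by
    intro σ
    rw [AB_mul_permMat hM m σ, smul_smul]
    have h1 : ((Equiv.Perm.sign σ : ℤ) : ℚ) * ((Equiv.Perm.sign σ : ℤ) : ℚ) = 1 := by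
      rw [← Int.cast_mul, ← Units.val_mul, Int.units_mul_self]
      norm_num
    rw [h1, one_smul]
  simp only [he]
  rw [Finset.sum_const, Finset.card_univ, Fintype.card_perm, Fintype.card_fin]
  rw [← Nat.cast_smul_eq_nsmul ℚ, smul_smul,
    inv_mul_cancel₀ (Nat.cast_ne_zero.mpr (Nat.factorial_ne_zero m)), one_smul]
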